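/- Let X and Y be 1-uniformly discrete metric spaces with bounded geometry, and suppose asdim_se(X) ≤ d. Suppose there is a regular map f : Y → X, a constant C, and a point a ∈ Y such that d_X(f(a), f(b)) ≤ C·log(1 + d_Y(a, b)) + C for all b ∈ Y. Then for every r > 0 there is a decomposition Y = Y₀ ∪ … ∪ Y_d in which each Y_i is a disjoint union of subsets ('pieces') any two of which are at distance ≥ r, such that the collection 𝒰 of all pieces is radially sublinear with respect to a: lim_{m→∞} (1/m) · sup{diam(U) : U ∈ 𝒰, d(a, U) ≤ m} = 0. -/

import Mathlib

open Metric Set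

/-- A metric space is 1-uniformly discrete. -/
def UnifDiscrete (X : Type*) [MetricSpace X] : Prop :=
  ∀ x y : X, x ≠ y → 1 ≤ dist x y

/-- Bounded geometry: balls of each radius have uniformly bounded cardinality. -/
def BddGeom (X : Type*) [MetricSpace X] : Prop :=
  ∀ R : ℝ, ∃ N : ℕ, ∀ (x : X) (s : Finset X), ↑s ⊆ Metric.closedBall x R → s.card ≤ N

/-- A regular map between metric spaces. -/
def IsRegularMap {X Y : Type*} [MetricSpace X] [MetricSpace Y] (f : X → Y) : Prop :=
  ∃ κ : ℕ, 1 ≤ κ ∧ (∀ x x' : X, dist (f x) (f x') ≤ κ * (1 + dist x x')) ∧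
    ∀ y : Y, ∃ c : Finset X, c.card ≤ κ ∧ f ⁻¹' Metric.ball y 1 ⊆ ⋃ x ∈ c, Metric.ball x 1

/-- A quasi-isometric embedding. -/
def IsQIEmbedding {X Y : Type*} [MetricSpace X] [MetricSpace Y] (f : X → Y) : Prop :=
  ∃ L D : ℝ, 1 ≤ L ∧ 0 ≤ D ∧ ∀ x x' : X,
    L⁻¹ * dist x x' - D ≤ dist (f x) (f x') ∧ dist (f x) (f x') ≤ L * dist x x' + D

/-- A coarse Lipschitz map. -/
def CoarseLipschitz {X Y : Type*} [MetricSpace X] [MetricSpace Y] (f : X → Y) : Prop :=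
  ∃ K : ℝ, 1 ≤ K ∧ ∀ x x' : X, dist (f x) (f x') ≤ K * dist x x' + K

/-- The metric of `T` is the graph metric of a 3-regular tree. -/
def IsCubicTreeMetric (T : Type*) [MetricSpace T] : Prop :=
  ∃ G : SimpleGraph T, G.Connected ∧ G.IsAcyclic ∧
    (∀ v : T, (G.neighborSet v).ncard = 3) ∧
    ∀ u v : T, dist u v = (G.dist u v : ℝ)

/-- The metric of `Z` is the graph metric of a connected graph of uniformly bounded degree. -/
def IsBddDegGraphMetric (Z : Type*) [MetricSpace Z] : Prop :=
  ∃ G : SimpleGraph Z, G.Connected ∧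
    (∃ D : ℕ, ∀ v : Z, (G.neighborSet v).ncard ≤ D) ∧
    ∀ u v : Z, dist u v = (G.dist u v : ℝ)

/-- A non-decreasing subexponential function `[0,∞) → [0,∞)`. -/
def SubexpFun (g : ℝ → ℝ) : Prop :=
  MonotoneOn g (Set.Ici 0) ∧ (∀ r : ℝ, 0 ≤ g r) ∧
    Filter.Tendsto (fun r => Real.log (g r) / r) Filter.atTop (nhds 0)

/-- Every ball of radius `r` in `Z` contains at most `g r` points. -/
def HasGrowthBound (Z : Type*) [MetricSpace Z] (g : ℝ → ℝ) : Prop :=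
  ∀ (z : Z) (r : ℝ), 0 ≤ r → ∀ s : Finset Z, ↑s ⊆ Metric.closedBall z r → (s.card : ℝ) ≤ g r

def HasSubexpGrowth (Z : Type*) [MetricSpace Z] : Prop :=
  ∃ g : ℝ → ℝ, SubexpFun g ∧ HasGrowthBound Z g

def HasPolyGrowth (Z : Type*) [MetricSpace Z] : Prop :=
  ∃ (C : ℝ) (d : ℕ), 1 ≤ C ∧ HasGrowthBound Z (fun r => C * r ^ d + C)

/-- Distinct members of the family are at distance at least `r` from each other. -/
def SepFamily {X : Type*} [MetricSpace X] (r : ℝ) (𝒰 : Set (Set X)) : Prop :=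
  ∀ U ∈ 𝒰, ∀ V ∈ 𝒰, U ≠ V → ∀ x ∈ U, ∀ y ∈ V, r ≤ dist x y

/-- A decomposition of `X` into `n+1` colours of `r`-separated pieces. -/
def Decomp {X : Type*} [MetricSpace X] (n : ℕ) (r : ℝ) (𝒰 : Fin (n+1) → Set (Set X)) : Prop :=
  (∀ x : X, ∃ i, ∃ U ∈ 𝒰 i, x ∈ U) ∧ ∀ i, SepFamily r (𝒰 i)

/-- A collection of subsets of `X` has growth uniformly controlled by the family `F`. -/
def FGrowing {X : Type*} [MetricSpace X] (F : Set (ℝ → ℝ)) (𝒰 : Set (Set X)) : Prop :=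
  ∃ f ∈ F, ∃ C : ℝ, 1 ≤ C ∧ ∀ U ∈ 𝒰, ∀ (x : X) (r : ℝ), 0 ≤ r →
    ∀ s : Finset X, ↑s ⊆ U ∩ Metric.closedBall x r → (s.card : ℝ) ≤ C * f (C * r) + C

/-- `asdim_F X ≤ n`. -/
def AsdimLE (F : Set (ℝ → ℝ)) (X : Type*) [MetricSpace X] (n : ℕ) : Prop :=
  ∀ r : ℝ, 0 < r → ∃ 𝒰 : Fin (n+1) → Set (Set X),
    Decomp n r 𝒰 ∧ FGrowing F (⋃ i, 𝒰 i)

/-- Iterated neighbourhoods `N^m_s(Y)` of `Y` with respect to the collection `𝒴`. -/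
def iterNbhd {X : Type*} [MetricSpace X] (𝒴 : Set (Set X)) (s : ℝ) : ℕ → Set X → Set X
  | 0, Y => Y
  | m + 1, Y => ⋃₀ {Y' | Y' ∈ 𝒴 ∧ ∃ x ∈ Y', ∃ z ∈ iterNbhd 𝒴 s m Y, dist x z ≤ s}

/-- `ov-asdim_F X ≤ n`. -/
def OvAsdimLE (F : Set (ℝ → ℝ)) (X : Type*) [MetricSpace X] (n : ℕ) : Prop :=
  ∀ r : ℝ, 0 < r → ∃ 𝒰 : Fin (n+1) → Set (Set X),
    Decomp n r 𝒰 ∧ ∀ s : ℝ, 1 ≤ s → ∀ m : ℕ,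
      FGrowing F ((iterNbhd (⋃ i, 𝒰 i) s m) '' (⋃ i, 𝒰 i))

/-- A family of non-decreasing functions `[0,∞) → [0,∞)`. -/
def NondecrFamily (F : Set (ℝ → ℝ)) : Prop :=
  ∀ f ∈ F, MonotoneOn f (Set.Ici 0) ∧ ∀ r : ℝ, 0 ≤ r → 0 ≤ f r

/-- The family of non-decreasing subexponential functions. -/
def seFamily : Set (ℝ → ℝ) := {g | SubexpFun g}

/-- The family of non-decreasing functions bounded by `C·r^d + C`. -/
def polyFamily (d : ℕ) : Set (ℝ → ℝ) :=
  {f | MonotoneOn f (Set.Ici 0) ∧ (∀ r : ℝ, 0 ≤ f r) ∧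
    ∃ C : ℝ, 0 < C ∧ ∀ r : ℝ, 0 ≤ r → f r ≤ C * r ^ d + C}

/-- `asdim X ≤ n` : classical asymptotic dimension. -/
def ClassicalAsdimLE (X : Type*) [MetricSpace X] (n : ℕ) : Prop :=
  ∀ r : ℝ, 0 < r → ∃ 𝒰 : Fin (n+1) → Set (Set X), Decomp n r 𝒰 ∧
    ∃ B : ℝ, ∀ U ∈ ⋃ i, 𝒰 i, ∀ x ∈ U, ∀ y ∈ U, dist x y ≤ B

section auxchain
variable {Y : Type*} [MetricSpace Y]

def stepRel (r : ℝ) (S : Set Y) (p q : Y) : Prop := p ∈ S ∧ q ∈ S ∧ dist p q ≤ r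

lemma stepRel_symm (r : ℝ) (S : Set Y) : Symmetric (stepRel r S) :=
  fun _ _ ⟨hp, hq, hd⟩ => ⟨hq, hp, by rwa [dist_comm]⟩

def chainComp (r : ℝ) (S : Set Y) (u : Y) : Set Y :=
  {z | Relation.ReflTransGen (stepRel r S) u z}

lemma mem_chainComp_self (r : ℝ) (S : Set Y) (u : Y) : u ∈ chainComp r S u :=
  Relation.ReflTransGen.refl

lemma chainComp_subset {r : ℝ} {S : Set Y} {u : Y} (hu : u ∈ S) : chainComp r S u ⊆ S := by
  intro z hz
  induction hz with
  | refl => exact hu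
  | tail _ h _ => exact h.2.1

lemma chainComp_eq_of_mem {r : ℝ} {S : Set Y} {u z : Y} (hz : z ∈ chainComp r S u) :
    chainComp r S z = chainComp r S u := by
  have hsymm : ∀ {a b : Y}, Relation.ReflTransGen (stepRel r S) a b →
      Relation.ReflTransGen (stepRel r S) b a := by
    intro a b h
    induction h with
    | refl => exact Relation.ReflTransGen.refl
    | tail _ hbc ih => exact Relation.ReflTransGen.head (stepRel_symm r S hbc) ih
  ext w
  exact ⟨fun hw => Relation.ReflTransGen.trans hz hw,
    fun hw => Relation.ReflTransGen.trans (hsymm hz) hw⟩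

lemma crossing {r : ℝ} {S : Set Y} {u z : Y}
    (h : Relation.ReflTransGen (stepRel r S) u z) :
    ∀ B : ℝ, 0 ≤ B → B < dist u z →
      ∃ w, w ∈ S ∧ Relation.ReflTransGen (stepRel r S) u w ∧ B < dist u w ∧ dist u w ≤ B + r := by
  induction h with
  | refl => intro B hB hlt; simp at hlt; linarith
  | @tail b c hb hbc ih =>
    intro B hB hlt
    by_cases hub : B < dist u b
    · exact ih B hB hub
    · push_neg at hub
      refine ⟨c, hbc.2.1, Relation.ReflTransGen.tail hb hbc, hlt, ?_⟩
      calc dist u c ≤ dist u b + dist b c := dist_triangle u b c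
        _ ≤ B + r := add_le_add hub hbc.2.2

lemma annulus {r : ℝ} (hr : 0 < r) {S : Set Y} {u z : Y}
    (h : Relation.ReflTransGen (stepRel r S) u z) :
    ∀ k : ℕ, (k * r : ℝ) < dist u z →
      ∃ t : Finset Y, ↑t ⊆ S ∩ Metric.closedBall u (k * r) ∧ k ≤ t.card := by
  intro k
  induction k with
  | zero => intro _; exact ⟨∅, by simp, by simp⟩
  | succ k ih =>
    intro hlt
    have hk : (k * r : ℝ) < dist u z := by
      push_cast at hlt ⊢; nlinarith
    obtain ⟨t, ht, hcard⟩ := ih hk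
    have hB : (0:ℝ) ≤ k * r := by positivity
    obtain ⟨w, hwS, _, hw1, hw2⟩ := crossing h (k * r) hB hk
    classical
    refine ⟨insert w t, ?_, ?_⟩
    · intro p hp
      simp only [Finset.coe_insert, Set.mem_insert_iff] at hp
      rcases hp with rfl | hp
      · refine ⟨hwS, ?_⟩
        simp only [Metric.mem_closedBall, dist_comm]
        push_cast; linarith
      · obtain ⟨h1, h2⟩ := ht hp
        refine ⟨h1, ?_⟩
        simp only [Metric.mem_closedBall] at h2 ⊢
        push_cast; nlinarith
    · have hw : w ∉ t := by
        intro hwt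
        have := (ht hwt).2
        simp only [Metric.mem_closedBall, dist_comm] at this
        linarith
      rw [Finset.card_insert_of_notMem hw]
      omega

end auxchain

section auxcount
variable {Y X : Type*} [MetricSpace Y] [MetricSpace X] [DecidableEq X]

lemma card_le_fiber_mul {f : Y → X} {κ N : ℕ}
    (hreg : ∀ x : X, ∃ c : Finset Y, c.card ≤ κ ∧
      f ⁻¹' Metric.ball x 1 ⊆ ⋃ y ∈ c, Metric.ball y 1)
    (hN : ∀ (y : Y) (s : Finset Y), ↑s ⊆ Metric.closedBall y 1 → s.card ≤ N)
    (t : Finset Y) : t.card ≤ κ * N * (t.image f).card := by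
  classical
  apply Finset.card_le_mul_card_image
  intro x₀ _
  obtain ⟨c, hc, hcov⟩ := hreg x₀
  set s := t.filter (fun p => f p = x₀) with hs
  have hsub : s ⊆ c.biUnion (fun y => s.filter (fun p => p ∈ Metric.ball y 1)) := by
    intro p hp
    have hpx : f p = x₀ := (Finset.mem_filter.mp hp).2
    have : p ∈ f ⁻¹' Metric.ball x₀ 1 := by
      simp [Set.mem_preimage, hpx]
    obtain ⟨_, ⟨y, rfl⟩, hy⟩ := hcov this
    simp only [Set.mem_iUnion, exists_prop] at hy
    obtain ⟨hyc, hpy⟩ := hy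
    exact Finset.mem_biUnion.mpr ⟨y, hyc, Finset.mem_filter.mpr ⟨hp, hpy⟩⟩
  calc s.card ≤ (c.biUnion (fun y => s.filter (fun p => p ∈ Metric.ball y 1))).card :=
        Finset.card_le_card hsub
    _ ≤ ∑ y ∈ c, (s.filter (fun p => p ∈ Metric.ball y 1)).card := Finset.card_biUnion_le
    _ ≤ ∑ _y ∈ c, N := by
        apply Finset.sum_le_sum
        intro y _
        apply hN y
        intro p hp
        exact Metric.ball_subset_closedBall (Finset.mem_filter.mp hp).2
    _ = c.card * N := by rw [Finset.sum_const, smul_eq_mul]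
    _ ≤ κ * N := Nat.mul_le_mul_right N hc

end auxcount

lemma subexp_bound {g : ℝ → ℝ} (hg : SubexpFun g) {δ : ℝ} (hδ : 0 < δ) :
    ∃ s₀ : ℝ, 0 ≤ s₀ ∧ ∀ s, s₀ ≤ s → g s ≤ Real.exp (δ * s) := by
  have := hg.2.2
  rw [Metric.tendsto_atTop] at this
  obtain ⟨s₁, hs₁⟩ := this δ hδ
  refine ⟨max s₁ 1, by positivity, ?_⟩
  intro s hs
  have hs1 : (1:ℝ) ≤ s := le_trans (le_max_right _ _) hs
  have hlog : Real.log (g s) / s < δ := by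
    have := hs₁ s (le_trans (le_max_left _ _) hs)
    rw [Real.dist_eq, sub_zero] at this
    exact lt_of_abs_lt this
  have hspos : (0:ℝ) < s := by linarith
  have hlog2 : Real.log (g s) < δ * s := by
    rw [div_lt_iff₀ hspos] at hlog; linarith [hlog]
  rcases eq_or_lt_of_le (hg.2.1 s) with h0 | h0
  · rw [← h0]; positivity
  · calc g s = Real.exp (Real.log (g s)) := (Real.exp_log h0).symm
      _ ≤ Real.exp (δ * s) := Real.exp_le_exp.mpr hlog2.le

lemma exp_half_le_two : Real.exp (1/2 : ℝ) ≤ 2 := by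
  nlinarith [Real.exp_one_lt_d9, Real.exp_pos (1/2 : ℝ),
    (Real.exp_add (1/2) (1/2)).symm, Real.exp_pos 1]


set_option maxHeartbeats 1600000 in
/-- If `asdim_se(X) ≤ d` and there is a regular map `f : Y → X` which is
exponentially distorted with respect to a basepoint `a ∈ Y`, then for every `r > 0` there is
a decomposition of `Y` into `d+1` colours of `r`-separated pieces whose collection of pieces
is radially sublinear with respect to `a`. -/
theorem radially_sublinear_decomposition_of_exp_distorted
    (X Y : Type*) [MetricSpace X] [MetricSpace Y]
    (hX : UnifDiscrete X) (hY : UnifDiscrete Y)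
    (hXb : BddGeom X) (hYb : BddGeom Y)
    (d : ℕ) (hdim : AsdimLE seFamily X d)
    (f : Y → X) (hf : IsRegularMap f) (C : ℝ) (a : Y)
    (hdist : ∀ b : Y, dist (f a) (f b) ≤ C * Real.log (1 + dist a b) + C) :
    ∀ r : ℝ, 0 < r → ∃ 𝒰 : Fin (d + 1) → Set (Set Y), Decomp d r 𝒰 ∧
      ∀ ε : ℝ, 0 < ε → ∃ M : ℝ, ∀ m : ℝ, M ≤ m →
        ∀ U ∈ ⋃ i, 𝒰 i, (∃ u ∈ U, dist a u ≤ m) →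
          ∀ x ∈ U, ∀ y ∈ U, dist x y ≤ ε * m := by
  classical
  intro r hr
  obtain ⟨κ, hκ1, hκlip, hκreg⟩ := hf
  have hκR : (1:ℝ) ≤ (κ:ℝ) := by exact_mod_cast hκ1
  have hC0 : 0 ≤ C := by
    have := hdist a
    simpa using this
  set s : ℝ := κ * (1 + r) with hs_def
  have hspos : 0 < s := by positivity
  obtain ⟨𝒱, ⟨hcov, hsep⟩, g, hgse, C₁, hC₁, hgrow⟩ := hdim s hspos
  have hgse' : SubexpFun g := hgse
  refine ⟨fun i => {W | ∃ U ∈ 𝒱 i, ∃ u, f u ∈ U ∧ W = chainComp r (f ⁻¹' U) u}, ⟨?_, ?_⟩, ?_⟩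
  · -- coverage
    intro y
    obtain ⟨i, U, hU, hyU⟩ := hcov (f y)
    exact ⟨i, chainComp r (f ⁻¹' U) y, ⟨U, hU, y, hyU, rfl⟩, mem_chainComp_self _ _ _⟩
  · -- separation
    intro i W hW W' hW' hne x hx y hy
    obtain ⟨U, hU, u, hu, rfl⟩ := hW
    obtain ⟨U', hU', u', hu', rfl⟩ := hW'
    by_contra hlt
    push_neg at hlt
    by_cases hUU : U = U'
    · subst hUU
      have hxS : x ∈ f ⁻¹' U := chainComp_subset (S := f ⁻¹' U) hu hx
      have hyS : y ∈ f ⁻¹' U := chainComp_subset (S := f ⁻¹' U) hu' hy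
      have hstep : Relation.ReflTransGen (stepRel r (f ⁻¹' U)) x y :=
        Relation.ReflTransGen.single ⟨hxS, hyS, hlt.le⟩
      apply hne
      calc chainComp r (f ⁻¹' U) u = chainComp r (f ⁻¹' U) x := (chainComp_eq_of_mem hx).symm
        _ = chainComp r (f ⁻¹' U) y := (chainComp_eq_of_mem (show y ∈ chainComp r (f ⁻¹' U) x from hstep)).symm
        _ = chainComp r (f ⁻¹' U) u' := chainComp_eq_of_mem hy
    · have h1 : f x ∈ U := chainComp_subset (S := f ⁻¹' U) hu hx
      have h2 : f y ∈ U' := chainComp_subset (S := f ⁻¹' U') hu' hy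
      have hs1 := hsep i U hU U' hU' hUU (f x) h1 (f y) h2
      have hs2 := hκlip x y
      rw [hs_def] at hs1
      nlinarith [dist_nonneg (x := x) (y := y)]
  · -- radial sublinearity
    intro ε hε
    obtain ⟨N, hN⟩ := hYb 1
    set δ : ℝ := 1 / (2 * C₁ * (C + 1)) with hδ_def
    have hδpos : 0 < δ := by rw [hδ_def]; positivity
    obtain ⟨s₀, hs₀0, hs₀⟩ := subexp_bound hgse' hδpos
    have hg0 : ∀ t, 0 ≤ g t := hgse'.2.1
    set A : ℝ := (κ:ℝ) * N * (C₁ * (g s₀ + 1)) with hA_def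
    set B : ℝ := (κ:ℝ) * N * C₁ * 2 with hB_def
    have hA0 : 0 ≤ A := by
      have := hg0 s₀; rw [hA_def]; positivity
    have hB0 : 0 ≤ B := by rw [hB_def]; positivity
    -- the key counting estimate
    have key_count : ∀ (U : Set X), U ∈ ⋃ i, 𝒱 i → ∀ (ρ : ℝ), 0 ≤ ρ →
        ∀ t : Finset Y, ↑t ⊆ f ⁻¹' U ∩ Metric.closedBall a ρ →
        (t.card : ℝ) ≤ A + B * Real.sqrt (1 + ρ) := by
      intro U hU ρ hρ t ht
      set R : ℝ := C * Real.log (1 + ρ) + C with hR_def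
      have hlognn : 0 ≤ Real.log (1 + ρ) := Real.log_nonneg (by linarith)
      have hR0 : 0 ≤ R := by rw [hR_def]; positivity
      have himg : ↑(t.image f) ⊆ U ∩ Metric.closedBall (f a) R := by
        intro x' hx'
        simp only [Finset.coe_image, Set.mem_image] at hx'
        obtain ⟨p, hp, rfl⟩ := hx'
        obtain ⟨hpU, hpb⟩ := ht hp
        refine ⟨hpU, ?_⟩
        simp only [Metric.mem_closedBall] at hpb ⊢
        have h1 : dist (f a) (f p) ≤ C * Real.log (1 + dist a p) + C := hdist p
        have h2 : dist a p ≤ ρ := by rwa [dist_comm]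
        have h3 : Real.log (1 + dist a p) ≤ Real.log (1 + ρ) :=
          Real.log_le_log (by positivity) (by linarith)
        rw [dist_comm]
        calc dist (f a) (f p) ≤ C * Real.log (1 + dist a p) + C := h1
          _ ≤ C * Real.log (1 + ρ) + C := by nlinarith
          _ = R := hR_def.symm
      have hcount : ((t.image f).card : ℝ) ≤ C₁ * g (C₁ * R) + C₁ :=
        hgrow U hU (f a) R hR0 (t.image f) himg
      have hfib : (t.card : ℝ) ≤ (κ:ℝ) * N * ((t.image f).card : ℝ) := by
        have := card_le_fiber_mul hκreg (fun y s hs => hN y s hs) t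
        exact_mod_cast this
      -- bound g (C₁ * R)
      set arg : ℝ := C₁ * R with harg_def
      have harg0 : 0 ≤ arg := by rw [harg_def]; positivity
      have hgarg : g arg ≤ g s₀ + Real.exp (δ * arg) := by
        rcases le_or_gt s₀ arg with h | h
        · have := hs₀ arg h
          linarith [hg0 s₀]
        · have := hgse'.1 (show arg ∈ Set.Ici (0:ℝ) from harg0)
            (show s₀ ∈ Set.Ici (0:ℝ) from hs₀0) h.le
          linarith [Real.exp_pos (δ * arg)]
      -- bound exp (δ * arg)
      have hexp : Real.exp (δ * arg) ≤ 2 * Real.sqrt (1 + ρ) := by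
        set L : ℝ := Real.log (1 + ρ) with hL_def
        have hLnn : 0 ≤ L := hlognn
        have hC₁pos : (0:ℝ) < C₁ := by linarith
        have hCp1 : (0:ℝ) < C + 1 := by linarith
        have hu : (δ * C₁) * (C + 1) = 1/2 := by
          rw [hδ_def]; field_simp
        have hδarg : δ * arg ≤ L * (1/2) + 1/2 := by
          have h1 : C * L + C ≤ (C+1) * L + (C+1) := by nlinarith
          have hupos : 0 < δ * C₁ := by positivity
          calc δ * arg = (δ * C₁) * (C * L + C) := by rw [harg_def, hR_def]; ring
            _ ≤ (δ * C₁) * ((C+1) * L + (C+1)) := by nlinarith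
            _ = ((δ * C₁) * (C + 1)) * (L + 1) := by ring
            _ = (1/2) * (L + 1) := by rw [hu]
            _ = L * (1/2) + 1/2 := by ring
        have h1ρpos : (0:ℝ) < 1 + ρ := by linarith
        have hrpow : Real.exp (L * (1/2)) = Real.sqrt (1 + ρ) := by
          rw [← Real.rpow_def_of_pos h1ρpos, ← Real.sqrt_eq_rpow]
        calc Real.exp (δ * arg) ≤ Real.exp (L * (1/2) + 1/2) := Real.exp_le_exp.mpr hδarg
          _ = Real.exp (L * (1/2)) * Real.exp (1/2) := Real.exp_add _ _
          _ = Real.sqrt (1 + ρ) * Real.exp (1/2) := by rw [hrpow]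
          _ ≤ Real.sqrt (1 + ρ) * 2 := by
              have := Real.sqrt_nonneg (1 + ρ)
              nlinarith [exp_half_le_two]
          _ = 2 * Real.sqrt (1 + ρ) := by ring
      have hP : (0:ℝ) ≤ (κ:ℝ) * N := by positivity
      calc (t.card : ℝ) ≤ (κ:ℝ) * N * ((t.image f).card : ℝ) := hfib
        _ ≤ (κ:ℝ) * N * (C₁ * g arg + C₁) := by
            apply mul_le_mul_of_nonneg_left _ hP
            exact hcount
        _ ≤ (κ:ℝ) * N * (C₁ * (g s₀ + 2 * Real.sqrt (1 + ρ)) + C₁) := by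
            apply mul_le_mul_of_nonneg_left _ hP
            have : g arg ≤ g s₀ + 2 * Real.sqrt (1 + ρ) := le_trans hgarg (by linarith [hexp])
            nlinarith
        _ = A + B * Real.sqrt (1 + ρ) := by rw [hA_def, hB_def]; ring
    -- choose M
    set η : ℝ := min ε 2 / 2 with hη_def
    have hηpos : 0 < η := by
      rw [hη_def]
      have : 0 < min ε 2 := lt_min hε (by norm_num)
      linarith
    have hηle1 : η ≤ 1 := by
      rw [hη_def]
      have : min ε 2 ≤ 2 := min_le_right _ _
      linarith
    have hη2ε : 2 * η ≤ ε := by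
      rw [hη_def]
      have : min ε 2 ≤ ε := min_le_left _ _
      linarith
    refine ⟨max 1 (((r/η) * (2*B + A + 2))^2), ?_⟩
    intro m hm W hW hex x hx y hy
    obtain ⟨u, huW, hum⟩ := hex
    have hm1 : (1:ℝ) ≤ m := le_trans (le_max_left _ _) hm
    have hmQ : ((r/η) * (2*B + A + 2))^2 ≤ m := le_trans (le_max_right _ _) hm
    simp only [Set.mem_iUnion, Set.mem_setOf_eq] at hW
    obtain ⟨i, U, hUi, u₀, hu₀, rfl⟩ := hW
    have hUmem : U ∈ ⋃ i, 𝒱 i := Set.mem_iUnion.mpr ⟨i, hUi⟩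
    have hWeq : chainComp r (f ⁻¹' U) u₀ = chainComp r (f ⁻¹' U) u :=
      (chainComp_eq_of_mem huW).symm
    rw [hWeq] at hx hy
    set k : ℕ := ⌊η * m / r⌋₊ with hk_def
    have hηm0 : 0 ≤ η * m / r := by positivity
    have hkr : (k:ℝ) * r ≤ η * m := by
      have h := Nat.floor_le hηm0
      have h2 : (k:ℝ) * r ≤ (η * m / r) * r :=
        mul_le_mul_of_nonneg_right h hr.le
      rwa [div_mul_cancel₀ _ (ne_of_gt hr)] at h2
    have hklb : η * m / r - 1 < (k:ℝ) := by
      have := Nat.lt_floor_add_one (η * m / r)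
      push_cast at this ⊢
      linarith
    set q : ℝ := Real.sqrt m with hq_def
    have hq0 : 0 ≤ q := Real.sqrt_nonneg m
    have hq2 : q^2 = m := Real.sq_sqrt (by linarith)
    have hq1 : 1 ≤ q := by
      rw [hq_def, show (1:ℝ) = Real.sqrt 1 by simp]
      exact Real.sqrt_le_sqrt hm1
    have hqM : (r/η) * (2*B + A + 2) ≤ q := by
      have := Real.sqrt_le_sqrt hmQ
      rwa [Real.sqrt_sq (by positivity)] at this
    have hkey : ∀ z, z ∈ chainComp r (f ⁻¹' U) u → dist u z ≤ (k:ℝ) * r := by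
      intro z hz
      by_contra hgt
      push_neg at hgt
      obtain ⟨t, ht, hcard⟩ := annulus hr hz k hgt
      have hkr0 : (0:ℝ) ≤ (k:ℝ) * r := by positivity
      have hsubset : ↑t ⊆ f ⁻¹' U ∩ Metric.closedBall a (m + (k:ℝ)*r) := by
        intro p hp
        obtain ⟨h1, h2⟩ := ht hp
        refine ⟨h1, ?_⟩
        simp only [Metric.mem_closedBall] at h2 ⊢
        have hua : dist u a ≤ m := by rw [dist_comm]; exact hum
        calc dist p a ≤ dist p u + dist u a := dist_triangle p u a
          _ ≤ (k:ℝ)*r + m := add_le_add h2 hua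
          _ = m + (k:ℝ)*r := by ring
      have hρ0 : (0:ℝ) ≤ m + (k:ℝ)*r := by linarith
      have hbound := key_count U hUmem (m + (k:ℝ)*r) hρ0 t hsubset
      have hsq : Real.sqrt (1 + (m + (k:ℝ)*r)) ≤ 2*q := by
        have hmη : η * m ≤ m := by nlinarith
        have h1 : 1 + (m + (k:ℝ)*r) ≤ 4*m := by nlinarith
        calc Real.sqrt (1 + (m + (k:ℝ)*r)) ≤ Real.sqrt (4*m) := Real.sqrt_le_sqrt h1
          _ = 2*q := by
              rw [show (4:ℝ)*m = (2*q)^2 by nlinarith, Real.sqrt_sq (by positivity)]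
      have hrη : (0:ℝ) < η / r := by positivity
      have hηq : (2*B + A + 2) ≤ (η/r) * q := by
        have h2 := mul_le_mul_of_nonneg_left hqM (le_of_lt hrη)
        calc (2*B+A+2) = (η/r) * ((r/η)*(2*B+A+2)) := by field_simp
          _ ≤ (η/r) * q := h2
      have hstep1 : (2*B+A+2)*q ≤ ((η/r)*q)*q := mul_le_mul_of_nonneg_right hηq hq0
      have hstep2 : A + 2 ≤ (A+2)*q := by nlinarith
      have hEq : η / r * q * q = η * m / r := by rw [← hq2]; ring
      have hmain : A + B * (2*q) ≤ η*m/r - 2 := by nlinarith [hstep1, hstep2, hEq]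
      have hBsq : B * Real.sqrt (1 + (m + (k:ℝ)*r)) ≤ B * (2*q) :=
        mul_le_mul_of_nonneg_left hsq hB0
      have hcard' : (k:ℝ) ≤ (t.card:ℝ) := by exact_mod_cast hcard
      linarith
    have hux := hkey x hx
    have huy := hkey y hy
    calc dist x y ≤ dist x u + dist u y := dist_triangle x u y
      _ ≤ (k:ℝ)*r + (k:ℝ)*r := by
          rw [dist_comm x u]; exact add_le_add hux huy
      _ ≤ 2*(η*m) := by linarith
      _ ≤ ε * m := by nlinarith
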